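/- Let α ≥ 1 and β ≥ α + 1 be integers, let G = (G₁,G₂) ∈ ℂ[X,Y]² satisfy det J_G(X,Y) = c·X^{β−α−1} identically for some nonzero constant c ∈ ℂ, and let H ∈ ℂ[U,V] and S ∈ ℂ[X,Y] satisfy H(G(X,Y)) = X^{β−α}·S(X,Y). If (x₀,y₀) ∈ ℂ² satisfies S(x₀,y₀) = 0 and either x₀ = 0, or x₀ ≠ 0 together with (∂S/∂X)(x₀,y₀) = (∂S/∂Y)(x₀,y₀) = 0, then G(x₀,y₀) is a singular point of the plane curve {H = 0}; that is, the G-image of the union of the singular points of the phantom curve {S = 0} and of {S = 0} ∩ {X = 0} is contained in the singular locus of {H = 0}. -/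
import Mathlib


open MvPolynomial Filter

abbrev PolyPair := MvPolynomial (Fin 2) ℂ × MvPolynomial (Fin 2) ℂ

noncomputable def eval2 (p : MvPolynomial (Fin 2) ℂ) (x y : ℂ) : ℂ :=
  MvPolynomial.eval ![x, y] p

noncomputable def jacDet (P Q : MvPolynomial (Fin 2) ℂ) : MvPolynomial (Fin 2) ℂ :=
  pderiv 0 P * pderiv 1 Q - pderiv 1 P * pderiv 0 Q

noncomputable def polyMap (F : PolyPair) (p : ℂ × ℂ) : ℂ × ℂ :=
  (eval2 F.1 p.1 p.2, eval2 F.2 p.1 p.2)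

/-- `F` is a Keller mapping: its Jacobian determinant is a nonzero constant. -/
def IsKeller (F : PolyPair) : Prop :=
  ∃ c : ℂ, c ≠ 0 ∧ jacDet F.1 F.2 = MvPolynomial.C c

/-- `(u₀,v₀)` is a singular point of the plane curve `{H = 0}`. -/
def IsSingularPoint (H : MvPolynomial (Fin 2) ℂ) (p : ℂ × ℂ) : Prop :=
  eval2 H p.1 p.2 = 0 ∧ eval2 (pderiv 0 H) p.1 p.2 = 0 ∧ eval2 (pderiv 1 H) p.1 p.2 = 0

/-- `G` is the `R`-dual of `F`, where `R(x,y) = (x^{-α}, x^β y + x^{-α} φ(x))`. -/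
def IsRDual (F G : PolyPair) (α β : ℕ) (φ : Polynomial ℂ) : Prop :=
  ∀ x : ℂ, x ≠ 0 → ∀ y : ℂ,
    polyMap G (x, y) = polyMap F ((x ^ α)⁻¹, x ^ β * y + (x ^ α)⁻¹ * Polynomial.eval x φ)

/-- `p` is an asymptotic value of `F` : a limit of `F` along a curve tending to infinity. -/
def IsAsympValue (F : PolyPair) (p : ℂ × ℂ) : Prop :=
  ∃ γ : ℝ → ℂ × ℂ, Continuous γ ∧ Tendsto (fun t => ‖γ t‖) atTop atTop ∧
    Tendsto (fun t => polyMap F (γ t)) atTop (nhds p)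

/-- `F` is a polynomial automorphism of `ℂ²`. -/
def IsPolyAuto (F : PolyPair) : Prop :=
  ∃ Finv : PolyPair, (∀ p, polyMap F (polyMap Finv p) = p) ∧
    (∀ p, polyMap Finv (polyMap F p) = p)

lemma chainRule (g : Fin 2 → MvPolynomial (Fin 2) ℂ) (i : Fin 2) (H : MvPolynomial (Fin 2) ℂ) :
    pderiv i (aeval g H) =
      aeval g (pderiv 0 H) * pderiv i (g 0) + aeval g (pderiv 1 H) * pderiv i (g 1) := by
  induction H using MvPolynomial.induction_on with
  | C a => simp
  | add p q hp hq => simp only [map_add, hp, hq]; ring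
  | mul_X p j hp =>
    simp only [map_mul, aeval_X, pderiv_mul, pderiv_X, hp, map_add, map_mul]
    fin_cases j <;> simp [Pi.single_apply] <;> ring

lemma evalComp (v : Fin 2 → ℂ) (g : Fin 2 → MvPolynomial (Fin 2) ℂ) (P : MvPolynomial (Fin 2) ℂ) :
    eval v (aeval g P) = eval (fun i => eval v (g i)) P := by
  rw [aeval_def, eval_eval₂]
  have : (eval v).comp (algebraMap ℂ (MvPolynomial (Fin 2) ℂ)) = RingHom.id ℂ := by
    ext r; simp [algebraMap_eq]
  rw [this, eval₂_id]

/-- the `G`-image of the singular points of the phantom curve and of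
`{S = 0} ∩ {X = 0}` lies in the singular locus of `{H = 0}`. -/
theorem phantom_image_in_singular_locus (α β : ℕ) (hα : 1 ≤ α) (hβ : α + 1 ≤ β)
    (G : PolyPair) (c : ℂ) (hc : c ≠ 0)
    (hdet : jacDet G.1 G.2 = MvPolynomial.C c * (X 0 : MvPolynomial (Fin 2) ℂ) ^ (β - α - 1))
    (H S : MvPolynomial (Fin 2) ℂ)
    (hfac : aeval ![G.1, G.2] H = (X 0 : MvPolynomial (Fin 2) ℂ) ^ (β - α) * S) :
    ∀ x₀ y₀ : ℂ, eval2 S x₀ y₀ = 0 →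
      (x₀ = 0 ∨ (x₀ ≠ 0 ∧ eval2 (pderiv 0 S) x₀ y₀ = 0 ∧ eval2 (pderiv 1 S) x₀ y₀ = 0)) →
      IsSingularPoint H (polyMap G (x₀, y₀)) := by
  intro x₀ y₀ hS hcase
  set m := β - α with hmdef
  have hm : 1 ≤ m := by omega
  have hm1 : β - α - 1 = m - 1 := rfl
  set g : Fin 2 → MvPolynomial (Fin 2) ℂ := ![G.1, G.2] with hg
  have hg0 : g 0 = G.1 := rfl
  have hg1 : g 1 = G.2 := rfl
  set a := pderiv (0 : Fin 2) G.1
  set b := pderiv (1 : Fin 2) G.1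
  set p := pderiv (0 : Fin 2) G.2
  set q := pderiv (1 : Fin 2) G.2
  set A := aeval g (pderiv (0 : Fin 2) H) with hA
  set B := aeval g (pderiv (1 : Fin 2) H) with hB
  have hdet' : a * q - b * p = MvPolynomial.C c * (X 0 : MvPolynomial (Fin 2) ℂ) ^ (m - 1) := hdet
  have hx : (X 0 : MvPolynomial (Fin 2) ℂ) ^ m = (X 0 : MvPolynomial (Fin 2) ℂ) ^ (m - 1) * X 0 := by
    rw [← pow_succ, Nat.sub_add_cancel hm]
  have e1 : A * a + B * p = pderiv 0 ((X 0 : MvPolynomial (Fin 2) ℂ) ^ m * S) := by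
    rw [← hfac, chainRule]; rfl
  have e2 : A * b + B * q = pderiv 1 ((X 0 : MvPolynomial (Fin 2) ℂ) ^ m * S) := by
    rw [← hfac, chainRule]; rfl
  have hD1 : pderiv 0 ((X 0 : MvPolynomial (Fin 2) ℂ) ^ m * S) =
      (X 0 : MvPolynomial (Fin 2) ℂ) ^ (m - 1) * ((m : MvPolynomial (Fin 2) ℂ) * S)
        + (X 0 : MvPolynomial (Fin 2) ℂ) ^ (m - 1) * (X 0 * pderiv 0 S) := by
    rw [pderiv_mul, pderiv_pow, pderiv_X_self, hx]; ring
  have hD2 : pderiv 1 ((X 0 : MvPolynomial (Fin 2) ℂ) ^ m * S) =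
      (X 0 : MvPolynomial (Fin 2) ℂ) ^ (m - 1) * (X 0 * pderiv 1 S) := by
    rw [pderiv_mul, pderiv_pow, pderiv_X_of_ne (by decide), hx]; ring
  rw [hD1] at e1; rw [hD2] at e2
  set R1 : MvPolynomial (Fin 2) ℂ :=
    (m : MvPolynomial (Fin 2) ℂ) * S * q + X 0 * pderiv 0 S * q - X 0 * pderiv 1 S * p with hR1
  set R2 : MvPolynomial (Fin 2) ℂ :=
    X 0 * pderiv 1 S * a - (m : MvPolynomial (Fin 2) ℂ) * S * b - X 0 * pderiv 0 S * b with hR2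
  have keyA : (X 0 : MvPolynomial (Fin 2) ℂ) ^ (m - 1) * (MvPolynomial.C c * A)
      = (X 0 : MvPolynomial (Fin 2) ℂ) ^ (m - 1) * R1 := by
    rw [hR1]; linear_combination q * e1 - p * e2 - A * hdet'
  have keyB : (X 0 : MvPolynomial (Fin 2) ℂ) ^ (m - 1) * (MvPolynomial.C c * B)
      = (X 0 : MvPolynomial (Fin 2) ℂ) ^ (m - 1) * R2 := by
    rw [hR2]; linear_combination a * e2 - b * e1 - B * hdet'
  have hXne : (X 0 : MvPolynomial (Fin 2) ℂ) ^ (m - 1) ≠ 0 :=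
    pow_ne_zero _ (MvPolynomial.X_ne_zero 0)
  have hcA : MvPolynomial.C c * A = R1 := mul_left_cancel₀ hXne keyA
  have hcB : MvPolynomial.C c * B = R2 := mul_left_cancel₀ hXne keyB
  -- evaluation
  set v : Fin 2 → ℂ := ![x₀, y₀] with hv
  have hw : (fun i => eval v (g i)) = ![eval2 G.1 x₀ y₀, eval2 G.2 x₀ y₀] := by
    funext i; fin_cases i <;> rfl
  have hR1v : eval v R1 = 0 := by
    have hSv : eval v S = 0 := hS
    rw [hR1]
    simp only [map_sub, map_add, map_mul, map_natCast, eval_X, hSv]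
    rcases hcase with h0 | ⟨hne, hsx, hsy⟩
    · have : v 0 = x₀ := rfl
      rw [this, h0]; ring
    · have hsx' : eval v (pderiv 0 S) = 0 := hsx
      have hsy' : eval v (pderiv 1 S) = 0 := hsy
      rw [hsx', hsy']; ring
  have hR2v : eval v R2 = 0 := by
    have hSv : eval v S = 0 := hS
    rw [hR2]
    simp only [map_sub, map_add, map_mul, map_natCast, eval_X, hSv]
    rcases hcase with h0 | ⟨hne, hsx, hsy⟩
    · have : v 0 = x₀ := rfl
      rw [this, h0]; ring
    · have hsx' : eval v (pderiv 0 S) = 0 := hsx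
      have hsy' : eval v (pderiv 1 S) = 0 := hsy
      rw [hsx', hsy']; ring
  have hAv : eval v A = 0 := by
    have := congrArg (eval v) hcA
    rw [map_mul, eval_C, hR1v] at this
    exact (mul_eq_zero.mp this).resolve_left hc
  have hBv : eval v B = 0 := by
    have := congrArg (eval v) hcB
    rw [map_mul, eval_C, hR2v] at this
    exact (mul_eq_zero.mp this).resolve_left hc
  refine ⟨?_, ?_, ?_⟩
  · show eval2 H (eval2 G.1 x₀ y₀) (eval2 G.2 x₀ y₀) = 0
    have : eval2 H (eval2 G.1 x₀ y₀) (eval2 G.2 x₀ y₀) = eval v (aeval g H) := by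
      rw [evalComp, hw]; rfl
    have hSv : eval v S = 0 := hS
    rw [this, hfac, map_mul, hSv, mul_zero]
  · show eval2 (pderiv 0 H) (eval2 G.1 x₀ y₀) (eval2 G.2 x₀ y₀) = 0
    have : eval2 (pderiv 0 H) (eval2 G.1 x₀ y₀) (eval2 G.2 x₀ y₀) = eval v A := by
      rw [hA, evalComp, hw]; rfl
    rw [this, hAv]
  · show eval2 (pderiv 1 H) (eval2 G.1 x₀ y₀) (eval2 G.2 x₀ y₀) = 0
    have : eval2 (pderiv 1 H) (eval2 G.1 x₀ y₀) (eval2 G.2 x₀ y₀) = eval v B := by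
      rw [hB, evalComp, hw]; rfl
    rw [this, hBv]
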